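/- Let M be a 2×2 complex matrix with purely imaginary entries (Re M = 0), det M = -1, and such that M/i is positive definite. Then there exists a Hermitian 2×2 matrix A with trace 0 such that M = e^{A + iπ/2 · I}. -/

import Mathlib

open Matrix
open scoped ComplexOrder

theorem purely_imaginary_det_neg_one_eq_exp (M : Matrix (Fin 2) (Fin 2) ℂ)
    (hRe : M + Mᴴ = 0) (hdet : M.det = -1)
    (hpos : Matrix.PosDef (Complex.I⁻¹ • M)) :
    ∃ A : Matrix (Fin 2) (Fin 2) ℂ, A.IsHermitian ∧ A.trace = 0 ∧
      M = NormedSpace.exp (A + ((Real.pi / 2 : ℂ) * Complex.I) • (1 : Matrix (Fin 2) (Fin 2) ℂ)) := by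
  classical
  set B : Matrix (Fin 2) (Fin 2) ℂ := Complex.I⁻¹ • M with hBdef
  have hB : B.IsHermitian := hpos.1
  set U : Matrix (Fin 2) (Fin 2) ℂ := (hB.eigenvectorUnitary : Matrix (Fin 2) (Fin 2) ℂ) with hUdef
  have hU1 : U * star U = 1 := (Matrix.mem_unitaryGroup_iff).mp hB.eigenvectorUnitary.2
  have hU2 : star U * U = 1 := (Matrix.mem_unitaryGroup_iff').mp hB.eigenvectorUnitary.2
  have hUinv : U⁻¹ = star U := inv_eq_right_inv hU1
  have hUunit : IsUnit U := ⟨⟨U, star U, hU1, hU2⟩, rfl⟩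
  set d : Fin 2 → ℝ := hB.eigenvalues with hddef
  have hdpos : ∀ i, 0 < d i := fun i => hpos.eigenvalues_pos i
  have hdetB : B.det = 1 := by
    have h2 : (Complex.I⁻¹ : ℂ) ^ 2 = -1 := by
      rw [Complex.inv_I, neg_pow, Complex.I_sq]; ring
    rw [hBdef, Matrix.det_smul, hdet, Fintype.card_fin, h2]; ring
  have hprod : (∏ i, d i) = 1 := by
    have h := hB.det_eq_prod_eigenvalues
    rw [hdetB] at h
    rw [hddef]
    exact Complex.ofReal_injective (by rw [Complex.ofReal_prod]; simpa using h.symm)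
  set D : Matrix (Fin 2) (Fin 2) ℂ := Matrix.diagonal (fun i => (Real.log (d i) : ℂ)) with hDdef
  refine ⟨U * D * star U, ?_, ?_, ?_⟩
  · -- Hermitian
    have hDH : Dᴴ = D := by
      rw [hDdef, Matrix.diagonal_conjTranspose]
      exact congrArg Matrix.diagonal (funext fun i => Complex.conj_ofReal _)
    show (U * D * star U)ᴴ = U * D * star U
    rw [Matrix.conjTranspose_mul, Matrix.conjTranspose_mul, hDH,
      Matrix.star_eq_conjTranspose, Matrix.conjTranspose_conjTranspose, mul_assoc]
  · -- trace 0
    rw [Matrix.trace_mul_cycle, hU2, one_mul, hDdef, Matrix.trace_diagonal]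
    have hsum : (∑ i, Real.log (d i)) = 0 := by
      rw [← Real.log_prod (fun i _ => (hdpos i).ne'), hprod, Real.log_one]
    exact_mod_cast congrArg (fun x : ℝ => (x : ℂ)) hsum
  · -- exponential
    have hcomm : Commute (U * D * star U)
        (((Real.pi / 2 : ℂ) * Complex.I) • (1 : Matrix (Fin 2) (Fin 2) ℂ)) :=
      (Commute.one_right _).smul_right _
    rw [Matrix.exp_add_of_commute _ _ hcomm]
    have hexpD : NormedSpace.exp D = Matrix.diagonal (fun i => (d i : ℂ)) := by
      rw [hDdef, Matrix.exp_diagonal]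
      refine congrArg Matrix.diagonal (funext fun i => ?_)
      rw [Pi.coe_exp, ← Complex.exp_eq_exp_ℂ, ← Complex.ofReal_exp,
        Real.exp_log (hdpos i)]
    have hexpA : NormedSpace.exp (U * D * star U) = B := by
      rw [← hUinv, Matrix.exp_conj _ _ hUunit, hexpD, hUinv]
      exact (hB.spectral_theorem).symm
    have hc : Complex.exp ((Real.pi / 2 : ℂ) * Complex.I) = Complex.I := by
      rw [Complex.exp_mul_I]
      have h1 : ((Real.pi : ℂ) / 2) = ((Real.pi / 2 : ℝ) : ℂ) := by push_cast; ring
      rw [h1, ← Complex.ofReal_cos, ← Complex.ofReal_sin,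
        Real.cos_pi_div_two, Real.sin_pi_div_two]
      simp
    have hexpc : NormedSpace.exp (((Real.pi / 2 : ℂ) * Complex.I) • (1 : Matrix (Fin 2) (Fin 2) ℂ))
        = Complex.I • (1 : Matrix (Fin 2) (Fin 2) ℂ) := by
      rw [Matrix.smul_one_eq_diagonal, Matrix.smul_one_eq_diagonal, Matrix.exp_diagonal]
      refine congrArg Matrix.diagonal (funext fun i => ?_)
      rw [Pi.coe_exp, ← Complex.exp_eq_exp_ℂ, hc]
    rw [hexpA, hexpc]
    rw [mul_smul_comm, mul_one, hBdef, smul_smul,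
      mul_inv_cancel₀ Complex.I_ne_zero, one_smul]
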